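/- Let n ≥ 3 be an integer and k a field whose characteristic is either zero or a prime p not dividing n!/2. Let W₁ₙ = {w : Fin (n+1) → k | ∑ i, w i = 0} with the alternating group 𝔞_{n+1} = alternatingGroup (Fin (n+1)) acting by (σ • w) i = w (σ⁻¹ i), and let G' = {σ ∈ 𝔞_{n+1} | σ 0 = 0} be the stabilizer of the index 0. Then for every integer m with 1 < m < n-1, the only element of the m-th exterior power ⋀^m W₁ₙ fixed by the induced action of every element of G' is 0. -/

import Mathlib

open scoped BigOperators

set_option synthInstance.maxHeartbeats 1000000
set_option maxHeartbeats 1000000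

/-- The sum-zero subspace `W₁ₙ = {w : Fin (n+1) → k | ∑ i, w i = 0}` of `k^(n+1)`. -/
def W1 (k : Type*) [Field k] (n : ℕ) : Submodule k (Fin (n + 1) → k) where
  carrier := {w | ∑ i, w i = 0}
  add_mem' := by
    intro a b ha hb
    simp only [Set.mem_setOf_eq, Pi.add_apply, Finset.sum_add_distrib] at *
    rw [ha, hb, add_zero]
  zero_mem' := by simp
  smul_mem' := by
    intro c a ha
    simp only [Set.mem_setOf_eq, Pi.smul_apply, smul_eq_mul, ← Finset.mul_sum] at *
    rw [ha, mul_zero]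

/-- The `k`-linear action of a permutation `σ` of the coordinates on `W₁ₙ`,
given by `(σ • w) i = w (σ⁻¹ i)`. -/
def actW (k : Type*) [Field k] (n : ℕ) (σ : Equiv.Perm (Fin (n + 1))) :
    W1 k n →ₗ[k] W1 k n where
  toFun w := ⟨fun i => (w : Fin (n + 1) → k) (σ⁻¹ i), by
    show ∑ i, (w : Fin (n + 1) → k) (σ⁻¹ i) = 0
    rw [Equiv.sum_comp σ⁻¹ (w : Fin (n + 1) → k)]
    exact w.2⟩
  map_add' a b := rfl
  map_smul' c a := rfl


section Aux

variable (k : Type*) [Field k] (n : ℕ)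

/-- The linear equivalence `W₁ₙ ≃ k^n` given by forgetting the coordinate at `0`. -/
def W1Equiv : W1 k n ≃ₗ[k] (Fin n → k) where
  toFun w i := (w : Fin (n + 1) → k) i.succ
  map_add' _ _ := rfl
  map_smul' _ _ := rfl
  invFun v := ⟨Fin.cons (-∑ i, v i) v, by
    show ∑ i, Fin.cons (-∑ i, v i) v i = 0
    rw [Fin.sum_univ_succ]
    simp⟩
  left_inv w := by
    apply Subtype.ext
    funext i
    dsimp only
    refine Fin.cases ?_ (fun j => ?_) i
    · rw [Fin.cons_zero]
      have hw : ∑ i, (w : Fin (n + 1) → k) i = 0 := w.2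
      rw [Fin.sum_univ_succ] at hw
      linear_combination -hw
    · rw [Fin.cons_succ]
  right_inv v := by
    funext i
    dsimp only
    rw [Fin.cons_succ]

/-- The basis of `W₁ₙ` given by `bW j = e_{j+1} - e_0`. -/
noncomputable def bW : Module.Basis (Fin n) k (W1 k n) := Module.Basis.ofEquivFun (W1Equiv k n)

lemma bW_succ (j j' : Fin n) :
    ((bW k n j : W1 k n) : Fin (n + 1) → k) j'.succ = (Pi.single j 1 : Fin n → k) j' := by
  have h : W1Equiv k n (bW k n j) = (Pi.single j 1 : Fin n → k) := by
    rw [bW, Module.Basis.coe_ofEquivFun]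
    exact (W1Equiv k n).apply_symm_apply _
  exact congrFun h j'

lemma bW_zero (j : Fin n) :
    ((bW k n j : W1 k n) : Fin (n + 1) → k) 0 = -1 := by
  have hw : ∑ i, ((bW k n j : W1 k n) : Fin (n + 1) → k) i = 0 := (bW k n j).2
  rw [Fin.sum_univ_succ] at hw
  rw [Finset.sum_congr rfl (fun j' _ => bW_succ k n j j')] at hw
  rw [Finset.sum_pi_single'] at hw
  simp only [Finset.mem_univ, if_true] at hw
  linear_combination hw

lemma actW_bW (σ : Equiv.Perm (Fin (n + 1))) (hσ0 : σ 0 = 0) (π : Fin n → Fin n)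
    (hπ : ∀ j, σ j.succ = (π j).succ) (j : Fin n) :
    actW k n σ (bW k n j) = bW k n (π j) := by
  have hπinj : Function.Injective π := by
    intro a b hab
    have h : σ a.succ = σ b.succ := by rw [hπ a, hπ b, hab]
    exact Fin.succ_injective n (σ.injective h)
  apply Subtype.ext
  funext i
  show ((bW k n j : W1 k n) : Fin (n + 1) → k) (σ⁻¹ i)
      = ((bW k n (π j) : W1 k n) : Fin (n + 1) → k) i
  obtain ⟨i', rfl⟩ : ∃ i', i = σ i' := ⟨σ⁻¹ i, (Equiv.apply_symm_apply σ i).symm⟩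
  rw [show σ⁻¹ (σ i') = i' from σ.symm_apply_apply i']
  refine Fin.cases ?_ (fun j'' => ?_) i'
  · rw [hσ0, bW_zero, bW_zero]
  · rw [hπ j'', bW_succ, bW_succ]
    simp only [Pi.single_apply]
    by_cases h : j'' = j
    · rw [if_pos h, if_pos (by rw [h])]
    · rw [if_neg h, if_neg (fun hc => h (hπinj hc))]

lemma actW_mul (σ τ : Equiv.Perm (Fin (n + 1))) :
    actW k n (σ * τ) = (actW k n σ) ∘ₗ (actW k n τ) := by
  apply LinearMap.ext
  intro w
  apply Subtype.ext
  funext i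
  show (w : Fin (n + 1) → k) ((σ * τ)⁻¹ i) = (w : Fin (n + 1) → k) (τ⁻¹ (σ⁻¹ i))
  rw [mul_inv_rev]
  rfl

end Aux

/-- For `n ≥ 3` and a field `k` of characteristic zero or a prime `p` not dividing `n!/2`,
for every `1 < m < n - 1` the only element of `⋀^m W₁ₙ` fixed by (the functorial action of)
every element of the stabilizer `G' = {σ ∈ 𝔞_{n+1} | σ 0 = 0}` is `0`. -/
theorem exteriorPower_stabilizer_fixed_eq_zero
    {k : Type*} [Field k] (n : ℕ) (hn : 3 ≤ n)
    (hchar : CharZero k ∨ ∃ p : ℕ, p.Prime ∧ CharP k p ∧ ¬ p ∣ n.factorial / 2)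
    (m : ℕ) (hm1 : 1 < m) (hmn : m < n - 1)
    (x : ExteriorAlgebra k (W1 k n)) (hx : x ∈ ⋀[k]^m (W1 k n))
    (hfix : ∀ σ : Equiv.Perm (Fin (n + 1)), σ ∈ alternatingGroup (Fin (n + 1)) → σ 0 = 0 →
      ExteriorAlgebra.map (actW k n σ) x = x) :
    x = 0 := by
  classical
  have hm2 : 2 ≤ m := hm1
  have hn4 : 4 ≤ n := by omega
  have hmn' : m + 2 ≤ n := by omega
  obtain ⟨t, ht⟩ : (4 : ℕ) ∣ n.factorial := Nat.dvd_factorial (by norm_num) hn4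
  have hfacpos := Nat.factorial_pos n
  have hfac2 : n.factorial / 2 = 2 * t := by omega
  have h2k : (2 : k) ≠ 0 := by
    rcases hchar with h | ⟨p, hp, hcp, hdvd⟩
    · exact two_ne_zero
    · intro h0
      have h2 : p ∣ 2 := (CharP.cast_eq_zero_iff k p 2).mp (by exact_mod_cast h0)
      have hp2 : p = 2 := (Nat.prime_dvd_prime_iff_eq hp Nat.prime_two).mp h2
      exact hdvd (by rw [hp2, hfac2]; exact ⟨t, rfl⟩)
  set A : Finset (Equiv.Perm (Fin (n + 1))) :=
    Finset.univ.filter (fun σ => Equiv.Perm.sign σ = 1 ∧ σ 0 = 0) with hA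
  have hmemA : ∀ σ : Equiv.Perm (Fin (n + 1)),
      σ ∈ A ↔ (Equiv.Perm.sign σ = 1 ∧ σ 0 = 0) := by
    intro σ; simp [hA]
  have hmulA : ∀ σ τ : Equiv.Perm (Fin (n + 1)), σ ∈ A → τ ∈ A → σ * τ ∈ A := by
    intro σ τ hσ hτ
    rw [hmemA] at hσ hτ ⊢
    refine ⟨by rw [map_mul, hσ.1, hτ.1, one_mul], ?_⟩
    show σ (τ 0) = 0
    rw [hτ.2, hσ.2]
  have hinvA : ∀ σ : Equiv.Perm (Fin (n + 1)), σ ∈ A → σ⁻¹ ∈ A := by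
    intro σ hσ
    rw [hmemA] at hσ ⊢
    refine ⟨by rw [map_inv, hσ.1, inv_one], ?_⟩
    rw [Equiv.Perm.inv_eq_iff_eq, hσ.2]
  set L : ExteriorAlgebra k (W1 k n) →ₗ[k] ExteriorAlgebra k (W1 k n) :=
    ∑ σ ∈ A, (ExteriorAlgebra.map (actW k n σ)).toLinearMap with hL
  -- L kills every wedge of m vectors
  have hkey : ∀ v : Fin m → W1 k n, L (ExteriorAlgebra.ιMulti k m v) = 0 := by
    have hext : (L.compAlternatingMap (ExteriorAlgebra.ιMulti k m)).toMultilinearMap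
        = (0 : (W1 k n) [⋀^Fin m]→ₗ[k] ExteriorAlgebra k (W1 k n)).toMultilinearMap := by
      apply Module.Basis.ext_multilinear (fun _ => bW k n)
      intro f
      show L (ExteriorAlgebra.ιMulti k m (fun i => bW k n (f i))) = 0
      by_cases hf : Function.Injective f
      · -- pick two indices outside the range of f
        have hcard : 1 < (Finset.univ.image f)ᶜ.card := by
          have himg : (Finset.univ.image f).card = m := by
            rw [Finset.card_image_of_injective _ hf, Finset.card_univ, Fintype.card_fin]
          rw [Finset.card_compl, himg, Fintype.card_fin]
          omega
        obtain ⟨c, hc, d, hd, hcd⟩ := Finset.one_lt_card.mp hcard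
        rw [Finset.mem_compl] at hc hd
        have hcf : ∀ i, f i ≠ c := fun i h =>
          hc (Finset.mem_image.mpr ⟨i, Finset.mem_univ i, h⟩)
        have hdf : ∀ i, f i ≠ d := fun i h =>
          hd (Finset.mem_image.mpr ⟨i, Finset.mem_univ i, h⟩)
        set i0 : Fin m := ⟨0, by omega⟩ with hi0
        set i1 : Fin m := ⟨1, by omega⟩ with hi1
        have hi01 : i0 ≠ i1 := by simp [hi0, hi1, Fin.ext_iff]
        have hab : f i0 ≠ f i1 := fun h => hi01 (hf h)
        set π : Equiv.Perm (Fin n) := Equiv.swap (f i0) (f i1) * Equiv.swap c d with hπdef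
        set τ : Equiv.Perm (Fin (n + 1)) :=
          Equiv.swap (f i0).succ (f i1).succ * Equiv.swap c.succ d.succ with hτdef
        have hτ0 : τ 0 = 0 := by
          show Equiv.swap (f i0).succ (f i1).succ (Equiv.swap c.succ d.succ 0) = 0
          rw [Equiv.swap_apply_of_ne_of_ne (Fin.succ_ne_zero c).symm (Fin.succ_ne_zero d).symm,
            Equiv.swap_apply_of_ne_of_ne (Fin.succ_ne_zero (f i0)).symm
              (Fin.succ_ne_zero (f i1)).symm]
        have hτs : ∀ z : Fin n, τ z.succ = (π z).succ := by
          intro z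
          show Equiv.swap (f i0).succ (f i1).succ (Equiv.swap c.succ d.succ z.succ)
            = (Equiv.swap (f i0) (f i1) (Equiv.swap c d z)).succ
          rw [Function.Injective.swap_apply (Fin.succ_injective n),
            Function.Injective.swap_apply (Fin.succ_injective n)]
        have hτA : τ ∈ A := by
          rw [hmemA]
          refine ⟨?_, hτ0⟩
          rw [hτdef, map_mul,
            Equiv.Perm.sign_swap (fun h => hab (Fin.succ_injective n h)),
            Equiv.Perm.sign_swap (fun h => hcd (Fin.succ_injective n h))]
          norm_num
        set y := ExteriorAlgebra.ιMulti k m (fun i => bW k n (f i)) with hy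
        have hτneg : ExteriorAlgebra.map (actW k n τ) y = -y := by
          rw [hy, ExteriorAlgebra.map_apply_ιMulti]
          have h1 : (fun i => actW k n τ (bW k n (f i)))
              = (fun i => bW k n (f i)) ∘ Equiv.swap i0 i1 := by
            funext i
            rw [actW_bW k n τ hτ0 (fun z => π z) hτs]
            show bW k n (π (f i)) = bW k n (f (Equiv.swap i0 i1 i))
            congr 1
            show Equiv.swap (f i0) (f i1) (Equiv.swap c d (f i)) = f (Equiv.swap i0 i1 i)
            rw [Equiv.swap_apply_of_ne_of_ne (hcf i) (hdf i)]
            by_cases h0 : i = i0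
            · rw [h0, Equiv.swap_apply_left, Equiv.swap_apply_left]
            · by_cases h1 : i = i1
              · rw [h1, Equiv.swap_apply_right, Equiv.swap_apply_right]
              · rw [Equiv.swap_apply_of_ne_of_ne (fun h => h0 (hf h)) (fun h => h1 (hf h)),
                  Equiv.swap_apply_of_ne_of_ne h0 h1]
          show ExteriorAlgebra.ιMulti k m (fun i => actW k n τ (bW k n (f i))) = -y
          rw [h1, AlternatingMap.map_swap _ _ hi01]
        have hLy : L y = ∑ σ ∈ A, (ExteriorAlgebra.map (actW k n σ)) y := by
          rw [hL, LinearMap.sum_apply]; rfl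
        have hsum : L y = -L y := by
          rw [hLy]
          calc ∑ σ ∈ A, (ExteriorAlgebra.map (actW k n σ)) y
              = ∑ σ ∈ A, (ExteriorAlgebra.map (actW k n (σ * τ))) y := by
                refine (Finset.sum_equiv (Equiv.mulRight τ) ?_ ?_).symm
                · intro σ
                  constructor
                  · intro hσ; exact hmulA σ τ hσ hτA
                  · intro hσ
                    have := hmulA _ _ hσ (hinvA τ hτA)
                    simpa using this
                · intro σ hσ; rfl
            _ = ∑ σ ∈ A, (ExteriorAlgebra.map (actW k n σ))
                  ((ExteriorAlgebra.map (actW k n τ)) y) := by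
                refine Finset.sum_congr rfl (fun σ _ => ?_)
                rw [actW_mul, ← ExteriorAlgebra.map_comp_map]
                rfl
            _ = ∑ σ ∈ A, (ExteriorAlgebra.map (actW k n σ)) (-y) := by rw [hτneg]
            _ = -∑ σ ∈ A, (ExteriorAlgebra.map (actW k n σ)) y := by
                rw [← Finset.sum_neg_distrib]
                exact Finset.sum_congr rfl (fun σ _ => map_neg _ y)
        have h2y : L y + L y = 0 := by
          nth_rewrite 1 [hsum]
          exact neg_add_cancel _
        have h2y' : (2 : k) • L y = 0 := by rw [two_smul]; exact h2y
        rcases smul_eq_zero.mp h2y' with h | h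
        · exact absurd h h2k
        · exact h
      · have hbf : ¬ Function.Injective (fun i => bW k n (f i)) := fun h => hf h.of_comp
        rw [(ExteriorAlgebra.ιMulti k m).map_eq_zero_of_not_injective _ hbf, map_zero]
    intro v
    exact DFunLike.congr_fun hext v
  -- L x = 0 since x lies in the m-th exterior power
  have hLx0 : L x = 0 := by
    have hle : (⋀[k]^m (W1 k n)) ≤ LinearMap.ker L := by
      rw [← ExteriorAlgebra.ιMulti_span_fixedDegree, Submodule.span_le]
      rintro _ ⟨v, rfl⟩
      exact hkey v
    exact hle hx
  -- L x = |A| • x by the fixed-point hypothesis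
  have hLx : L x = (A.card : k) • x := by
    rw [hL, LinearMap.sum_apply]
    have hc : ∀ σ ∈ A, (ExteriorAlgebra.map (actW k n σ)).toLinearMap x = x := by
      intro σ hσ
      rw [hmemA] at hσ
      exact hfix σ (Equiv.Perm.mem_alternatingGroup.mpr hσ.1) hσ.2
    rw [Finset.sum_congr rfl hc, Finset.sum_const, Nat.cast_smul_eq_nsmul]
  -- |A| = n!/2
  haveI : Nontrivial (Fin n) := ⟨⟨⟨0, by omega⟩, ⟨1, by omega⟩, by simp [Fin.ext_iff]⟩⟩
  have hp0 : ∀ σ : Equiv.Perm (Fin (n + 1)), σ 0 = 0 →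
      (Equiv.Perm.decomposeFin σ).1 = 0 := by
    intro σ hσ
    have h := Equiv.Perm.decomposeFin_symm_apply_zero
      (Equiv.Perm.decomposeFin σ).1 (Equiv.Perm.decomposeFin σ).2
    rw [Prod.mk.eta, Equiv.symm_apply_apply] at h
    rw [← h, hσ]
  have hsign : ∀ σ : Equiv.Perm (Fin (n + 1)), σ 0 = 0 →
      Equiv.Perm.sign σ = Equiv.Perm.sign (Equiv.Perm.decomposeFin σ).2 := by
    intro σ hσ
    have h := Equiv.Perm.decomposeFin.symm_sign
      (Equiv.Perm.decomposeFin σ).1 (Equiv.Perm.decomposeFin σ).2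
    rw [Prod.mk.eta, Equiv.symm_apply_apply, hp0 σ hσ, if_pos rfl, one_mul] at h
    exact h
  have hcardA : A.card = n.factorial / 2 := by
    have h1 : A.card
        = (Finset.univ.filter (fun e : Equiv.Perm (Fin n) => Equiv.Perm.sign e = 1)).card := by
      refine Finset.card_nbij' (fun σ => (Equiv.Perm.decomposeFin σ).2)
        (fun e => Equiv.Perm.decomposeFin.symm (0, e)) ?_ ?_ ?_ ?_
      · intro σ hσ
        rw [Finset.mem_coe, hmemA] at hσ
        rw [Finset.mem_coe, Finset.mem_filter]
        exact ⟨Finset.mem_univ _, by rw [← hsign σ hσ.2, hσ.1]⟩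
      · intro e he
        rw [Finset.mem_coe, Finset.mem_filter] at he
        rw [Finset.mem_coe, hmemA]
        constructor
        · rw [Equiv.Perm.decomposeFin.symm_sign, if_pos rfl, one_mul, he.2]
        · exact Equiv.Perm.decomposeFin_symm_apply_zero 0 e
      · intro σ hσ
        rw [Finset.mem_coe, hmemA] at hσ
        have hde : Equiv.Perm.decomposeFin σ = (0, (Equiv.Perm.decomposeFin σ).2) :=
          Prod.ext (hp0 σ hσ.2) rfl
        dsimp only
        rw [← hde]
        exact Equiv.symm_apply_apply _ _
      · intro e he
        dsimp only
        rw [Equiv.apply_symm_apply]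
    have h2 : 2 * (Finset.univ.filter
        (fun e : Equiv.Perm (Fin n) => Equiv.Perm.sign e = 1)).card = n.factorial := by
      have htm := two_mul_card_alternatingGroup (α := Fin n)
      rw [Fintype.card_perm, Fintype.card_fin] at htm
      have hcsub : Fintype.card (alternatingGroup (Fin n)) = (Finset.univ.filter
          (fun e : Equiv.Perm (Fin n) => Equiv.Perm.sign e = 1)).card := by
        rw [← Fintype.card_subtype]
        exact Fintype.card_congr
          (Equiv.subtypeEquivRight (fun e => Equiv.Perm.mem_alternatingGroup))
      rw [← hcsub, htm]
    omega
  have hNk : ((A.card : k)) ≠ 0 := by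
    rw [hcardA]
    rcases hchar with h | ⟨p, hp, hcp, hdvd⟩
    · exact Nat.cast_ne_zero.mpr (by omega)
    · intro h0
      exact hdvd ((CharP.cast_eq_zero_iff k p (n.factorial / 2)).mp h0)
  rw [hLx0] at hLx
  rcases smul_eq_zero.mp hLx.symm with h | h
  · exact absurd h hNk
  · exact h
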